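/- Let M ∈ ℝ^{m×n} be a rank-r μ-incoherent matrix with largest and smallest nonzero singular values Σmax ≥ Σmin > 0, and let β_T > 0. Suppose X ∈ ℝ^{m×r} and Y ∈ ℝ^{n×r} satisfy d := ‖M − X·Yᵀ‖_F ≤ Σmin/(10r), ‖X‖_F ≤ β_T and ‖Y‖_F ≤ β_T. Then there exist U ∈ ℝ^{m×r} and V ∈ ℝ^{n×r} such that: (i) U·Vᵀ = M; (ii) ‖U‖_F ≤ ‖X‖_F; (iii) ‖U − X‖_F ≤ (5β_T/(4Σmin))·d and ‖V − Y‖_F ≤ (5β_T/(2Σmin))·d; (iv) ‖U^{(i)}‖² ≤ (rμ/m)·β_T² for every row index 1 ≤ i ≤ m, and ‖V^{(j)}‖² ≤ (3rμ/(2n))·β_T² for every row index 1 ≤ j ≤ n. -/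

import Mathlib

open Matrix
open scoped Classical

noncomputable section

/-- Frobenius norm of a real matrix. -/
def frob {m n : ℕ} (A : Matrix (Fin m) (Fin n) ℝ) : ℝ :=
  Real.sqrt (∑ i, ∑ j, A i j ^ 2)

/-- Euclidean norm of the `i`-th row of a matrix. -/
def rowNorm {m n : ℕ} (A : Matrix (Fin m) (Fin n) ℝ) (i : Fin m) : ℝ :=
  Real.sqrt (∑ j, A i j ^ 2)

/-- Frobenius inner product `⟨A,B⟩ = trace(AᵀB)`. -/
def finner {m n : ℕ} (A B : Matrix (Fin m) (Fin n) ℝ) : ℝ :=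
  ∑ i, ∑ j, A i j * B i j

/-- Projection onto the set of entries indexed by `Ω` (other entries are set to `0`). -/
def projOmega {m n : ℕ} (Ω : Finset (Fin m × Fin n)) (A : Matrix (Fin m) (Fin n) ℝ) :
    Matrix (Fin m) (Fin n) ℝ :=
  Matrix.of fun i j => if (i, j) ∈ Ω then A i j else 0

/-- `G₀(z) = (max{0, z-1})²`. -/
def G0 (z : ℝ) : ℝ := max 0 (z - 1) ^ 2

/-- `G₀′(z) = 2·max{0, z-1}`. -/
def G0' (z : ℝ) : ℝ := 2 * max 0 (z - 1)

/-- The matrix whose `i`-th row is the `i`-th row of `A` and whose other rows vanish. -/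
def rowMat {m n : ℕ} (A : Matrix (Fin m) (Fin n) ℝ) (i : Fin m) :
    Matrix (Fin m) (Fin n) ℝ :=
  Matrix.of fun i' j => if i' = i then A i j else 0

/-- The regularizer `G(X,Y)`. -/
def Greg {m n r : ℕ} (ρ β1 β2 βT : ℝ) (X : Matrix (Fin m) (Fin r) ℝ)
    (Y : Matrix (Fin n) (Fin r) ℝ) : ℝ :=
  ρ * ∑ i, G0 (3 * rowNorm X i ^ 2 / (2 * β1 ^ 2)) +
    ρ * ∑ j, G0 (3 * rowNorm Y j ^ 2 / (2 * β2 ^ 2)) +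
    ρ * G0 (3 * frob X ^ 2 / (2 * βT ^ 2)) +
    ρ * G0 (3 * frob Y ^ 2 / (2 * βT ^ 2))

/-- The regularized objective `F̃(X,Y)`. -/
def Ftilde {m n r : ℕ} (Ω : Finset (Fin m × Fin n)) (M : Matrix (Fin m) (Fin n) ℝ)
    (ρ β1 β2 βT : ℝ) (X : Matrix (Fin m) (Fin r) ℝ) (Y : Matrix (Fin n) (Fin r) ℝ) : ℝ :=
  (1 / 2) * frob (projOmega Ω (M - X * Yᵀ)) ^ 2 + Greg ρ β1 β2 βT X Y

/-- Gradient of the regularizer with respect to one of the factors. -/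
def gradG1 {m r : ℕ} (ρ β βT : ℝ) (X : Matrix (Fin m) (Fin r) ℝ) :
    Matrix (Fin m) (Fin r) ℝ :=
  (∑ i, (ρ * G0' (3 * rowNorm X i ^ 2 / (2 * β ^ 2)) * (3 / β ^ 2)) • rowMat X i) +
    (ρ * G0' (3 * frob X ^ 2 / (2 * βT ^ 2)) * (3 / βT ^ 2)) • X

/-- `∇_X F̃(X,Y)`. -/
def gradX {m n r : ℕ} (Ω : Finset (Fin m × Fin n)) (M : Matrix (Fin m) (Fin n) ℝ)
    (ρ β1 βT : ℝ) (X : Matrix (Fin m) (Fin r) ℝ) (Y : Matrix (Fin n) (Fin r) ℝ) :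
    Matrix (Fin m) (Fin r) ℝ :=
  projOmega Ω (X * Yᵀ - M) * Y + gradG1 ρ β1 βT X

/-- `∇_Y F̃(X,Y)`. -/
def gradY {m n r : ℕ} (Ω : Finset (Fin m × Fin n)) (M : Matrix (Fin m) (Fin n) ℝ)
    (ρ β2 βT : ℝ) (X : Matrix (Fin m) (Fin r) ℝ) (Y : Matrix (Fin n) (Fin r) ℝ) :
    Matrix (Fin n) (Fin r) ℝ :=
  (projOmega Ω (X * Yᵀ - M))ᵀ * X + gradG1 ρ β2 βT Y

/-- Membership in `K₁`. -/
def K1mem {m n r : ℕ} (β1 β2 : ℝ) (X : Matrix (Fin m) (Fin r) ℝ)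
    (Y : Matrix (Fin n) (Fin r) ℝ) : Prop :=
  (∀ i, rowNorm X i ≤ β1) ∧ ∀ j, rowNorm Y j ≤ β2

/-- Membership in `K₂`. -/
def K2mem {m n r : ℕ} (βT : ℝ) (X : Matrix (Fin m) (Fin r) ℝ)
    (Y : Matrix (Fin n) (Fin r) ℝ) : Prop :=
  frob X ≤ βT ∧ frob Y ≤ βT

/-- Membership in `K(t) = {(X,Y) : ‖M - XYᵀ‖_F ≤ t}`. -/
def Kmem {m n r : ℕ} (M : Matrix (Fin m) (Fin n) ℝ) (t : ℝ)
    (X : Matrix (Fin m) (Fin r) ℝ) (Y : Matrix (Fin n) (Fin r) ℝ) : Prop :=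
  frob (M - X * Yᵀ) ≤ t


section StmtAux


/-- Euclidean norm of a finitely-indexed real vector. -/
def snorm {ι : Type*} [Fintype ι] (v : ι → ℝ) : ℝ := Real.sqrt (∑ i, v i ^ 2)

variable {ι κ : Type*} [Fintype ι] [Fintype κ]

lemma sumSq_nonneg (v : ι → ℝ) : 0 ≤ ∑ i, v i ^ 2 :=
  Finset.sum_nonneg fun i _ => sq_nonneg _

lemma snorm_nonneg (v : ι → ℝ) : 0 ≤ snorm v := Real.sqrt_nonneg _

lemma snorm_sq (v : ι → ℝ) : snorm v ^ 2 = ∑ i, v i ^ 2 := Real.sq_sqrt (sumSq_nonneg v)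

lemma snorm_le_of_sq_le {v : ι → ℝ} {t : ℝ} (ht : 0 ≤ t) (h : ∑ i, v i ^ 2 ≤ t ^ 2) :
    snorm v ≤ t := by
  have := Real.sqrt_le_sqrt h
  rwa [Real.sqrt_sq ht] at this

lemma le_snorm_of_sq_le {v : ι → ℝ} {t : ℝ} (ht : 0 ≤ t) (h : t ^ 2 ≤ ∑ i, v i ^ 2) :
    t ≤ snorm v := by
  have := Real.sqrt_le_sqrt h
  rwa [Real.sqrt_sq ht] at this

lemma sum_mul_le_snorm_mul_snorm (v w : ι → ℝ) :
    ∑ i, v i * w i ≤ snorm v * snorm w := by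
  have h := Finset.sum_mul_sq_le_sq_mul_sq Finset.univ v w
  have h2 : ∑ i, v i * w i ≤ Real.sqrt ((∑ i, v i * w i) ^ 2) := by
    rw [Real.sqrt_sq_eq_abs]; exact le_abs_self _
  calc ∑ i, v i * w i ≤ Real.sqrt ((∑ i, v i * w i) ^ 2) := h2
    _ ≤ Real.sqrt ((∑ i, v i ^ 2) * ∑ i, w i ^ 2) := Real.sqrt_le_sqrt h
    _ = snorm v * snorm w := Real.sqrt_mul (sumSq_nonneg v) _

lemma snorm_add_le (v w : ι → ℝ) : snorm (v + w) ≤ snorm v + snorm w := by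
  have hvw := sum_mul_le_snorm_mul_snorm v w
  apply snorm_le_of_sq_le (add_nonneg (snorm_nonneg v) (snorm_nonneg w))
  have : ∑ i, (v + w) i ^ 2 = (∑ i, v i ^ 2) + 2 * (∑ i, v i * w i) + ∑ i, w i ^ 2 := by
    simp only [Pi.add_apply, add_sq, Finset.sum_add_distrib, Finset.mul_sum, mul_assoc]
  rw [this]
  have h1 := snorm_sq v; have h2 := snorm_sq w
  nlinarith [snorm_nonneg v, snorm_nonneg w]

lemma snorm_sub_le_snorm (a b : ι → ℝ) : snorm a - snorm b ≤ snorm (a - b) := by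
  have := snorm_add_le (a - b) b
  simp at this
  linarith

lemma snorm_pos_of_ne_zero {v : ι → ℝ} (hv : v ≠ 0) : 0 < snorm v := by
  apply Real.sqrt_pos.2
  obtain ⟨i, hi⟩ := Function.ne_iff.1 hv
  have hpos : (0:ℝ) < v i ^ 2 :=
    lt_of_le_of_ne (sq_nonneg _) (Ne.symm (pow_ne_zero 2 hi))
  calc (0:ℝ) < v i ^ 2 := hpos
    _ ≤ ∑ j, v j ^ 2 :=
      Finset.single_le_sum (f := fun j => v j ^ 2) (fun j _ => sq_nonneg _) (Finset.mem_univ i)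

/-- Squared Frobenius norm. -/
def fsq {ι κ : Type*} [Fintype ι] [Fintype κ] (A : Matrix ι κ ℝ) : ℝ := ∑ i, ∑ j, A i j ^ 2

lemma fsq_nonneg (A : Matrix ι κ ℝ) : 0 ≤ fsq A :=
  Finset.sum_nonneg fun i _ => sumSq_nonneg _

lemma fsq_transpose (A : Matrix ι κ ℝ) : fsq Aᵀ = fsq A := Finset.sum_comm

lemma fsq_neg (A : Matrix ι κ ℝ) : fsq (-A) = fsq A := by
  unfold fsq; simp

/-- Cauchy–Schwarz for matrix–vector products, squared form. -/
lemma mv_sq_le (A : Matrix ι κ ℝ) (v : κ → ℝ) :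
    ∑ i, (A *ᵥ v) i ^ 2 ≤ fsq A * ∑ j, v j ^ 2 := by
  unfold fsq
  rw [Finset.sum_mul]
  apply Finset.sum_le_sum
  intro i _
  exact Finset.sum_mul_sq_le_sq_mul_sq Finset.univ (fun j => A i j) v

lemma snorm_mv_le {A : Matrix ι κ ℝ} {t : ℝ} (ht : 0 ≤ t) (hA : fsq A ≤ t ^ 2) (v : κ → ℝ) :
    snorm (A *ᵥ v) ≤ t * snorm v := by
  apply snorm_le_of_sq_le (mul_nonneg ht (snorm_nonneg v))
  calc ∑ i, (A *ᵥ v) i ^ 2 ≤ fsq A * ∑ j, v j ^ 2 := mv_sq_le A v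
    _ ≤ t ^ 2 * ∑ j, v j ^ 2 := by
        apply mul_le_mul_of_nonneg_right hA (sumSq_nonneg v)
    _ = (t * snorm v) ^ 2 := by rw [mul_pow, snorm_sq]

/-- adjoint identity -/
lemma adj_sum (A : Matrix ι κ ℝ) (w : ι → ℝ) (p : κ → ℝ) :
    ∑ i, w i * (A *ᵥ p) i = ∑ k, (Aᵀ *ᵥ w) k * p k := by
  simp only [mulVec, dotProduct, transpose_apply, Finset.mul_sum, Finset.sum_mul]
  rw [Finset.sum_comm]
  apply Finset.sum_congr rfl; intro k _
  apply Finset.sum_congr rfl; intro i _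
  ring

lemma orth_mv {A : Matrix ι κ ℝ} [DecidableEq κ] (h : Aᵀ * A = 1) (w : κ → ℝ) :
    ∑ i, (A *ᵥ w) i ^ 2 = ∑ k, w k ^ 2 := by
  have : ∑ i, (A *ᵥ w) i ^ 2 = ∑ i, (A *ᵥ w) i * (A *ᵥ w) i := by
    apply Finset.sum_congr rfl; intro i _; ring
  rw [this, adj_sum A (A *ᵥ w) w]
  have h2 : Aᵀ *ᵥ (A *ᵥ w) = w := by
    rw [mulVec_mulVec, h, one_mulVec]
  rw [h2]
  apply Finset.sum_congr rfl; intro k _; ring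

lemma orth_snorm {A : Matrix ι κ ℝ} [DecidableEq κ] (h : Aᵀ * A = 1) (w : κ → ℝ) :
    snorm (A *ᵥ w) = snorm w := by
  unfold snorm; rw [orth_mv h w]

lemma contract_snorm {A : Matrix ι κ ℝ} [DecidableEq κ] (h : Aᵀ * A = 1) (w : ι → ℝ) :
    snorm (Aᵀ *ᵥ w) ≤ snorm w := by
  set p := Aᵀ *ᵥ w with hp
  have key : ∑ k, p k ^ 2 ≤ snorm w * snorm p := by
    have e1 : ∑ k, p k ^ 2 = ∑ i, w i * (A *ᵥ p) i := by
      rw [adj_sum A w p, ← hp]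
      apply Finset.sum_congr rfl; intro k _; ring
    rw [e1]
    calc ∑ i, w i * (A *ᵥ p) i ≤ snorm w * snorm (A *ᵥ p) := sum_mul_le_snorm_mul_snorm _ _
      _ = snorm w * snorm p := by rw [orth_snorm h]
  have hsq : snorm p ^ 2 ≤ snorm w * snorm p := by rw [snorm_sq]; exact key
  rcases eq_or_lt_of_le (snorm_nonneg p) with h0 | h0
  · rw [← h0]; exact snorm_nonneg w
  · nlinarith [hsq, h0]

lemma contract_mv_sq {A : Matrix ι κ ℝ} [DecidableEq κ] (h : Aᵀ * A = 1) (w : ι → ℝ) :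
    ∑ k, (Aᵀ *ᵥ w) k ^ 2 ≤ ∑ i, w i ^ 2 := by
  have := contract_snorm h w
  have h1 := snorm_sq (Aᵀ *ᵥ w); have h2 := snorm_sq w
  nlinarith [snorm_nonneg (Aᵀ *ᵥ w), snorm_nonneg w]


section MatrixLemmas
variable {a b r : ℕ}

lemma entry_mul_eq_mulVec (P : Matrix (Fin a) (Fin b) ℝ) (C : Matrix (Fin b) (Fin r) ℝ)
    (i : Fin a) (k : Fin r) : (P * C) i k = (P *ᵥ (fun l => C l k)) i := by
  simp [Matrix.mul_apply, Matrix.mulVec, dotProduct]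

lemma fsq_lmul_orth {P : Matrix (Fin a) (Fin b) ℝ} (h : Pᵀ * P = 1)
    (C : Matrix (Fin b) (Fin r) ℝ) : fsq (P * C) = fsq C := by
  unfold fsq
  rw [Finset.sum_comm]
  have : ∀ k : Fin r, ∑ i, (P * C) i k ^ 2 = ∑ l, C l k ^ 2 := by
    intro k
    have := orth_mv h (fun l => C l k)
    simpa [entry_mul_eq_mulVec] using this
  rw [Finset.sum_congr rfl fun k _ => this k, Finset.sum_comm]

lemma fsq_lmul_contract {P : Matrix (Fin a) (Fin b) ℝ} (h : Pᵀ * P = 1)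
    (W : Matrix (Fin a) (Fin r) ℝ) : fsq (Pᵀ * W) ≤ fsq W := by
  calc fsq (Pᵀ * W) = ∑ k, ∑ j, (Pᵀ * W) j k ^ 2 := Finset.sum_comm
    _ ≤ ∑ k, ∑ i, W i k ^ 2 := by
        apply Finset.sum_le_sum
        intro k _
        have := contract_mv_sq h (fun i => W i k)
        simpa [entry_mul_eq_mulVec] using this
    _ = fsq W := Finset.sum_comm

lemma fsq_rmul_contract {P : Matrix (Fin a) (Fin b) ℝ} (h : Pᵀ * P = 1)
    (W : Matrix (Fin r) (Fin a) ℝ) : fsq (W * P) ≤ fsq W := by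
  have h1 : W * P = (Pᵀ * Wᵀ)ᵀ := by
    rw [Matrix.transpose_mul, Matrix.transpose_transpose, Matrix.transpose_transpose]
  rw [h1, fsq_transpose]
  calc fsq (Pᵀ * Wᵀ) ≤ fsq Wᵀ := fsq_lmul_contract h Wᵀ
    _ = fsq W := fsq_transpose W

lemma fsq_proj_residual {P : Matrix (Fin a) (Fin b) ℝ} (h : Pᵀ * P = 1)
    (W : Matrix (Fin a) (Fin r) ℝ) : fsq (P * (Pᵀ * W) - W) ≤ fsq W := by
  have main : ∀ k : Fin r, ∑ i, (P * (Pᵀ * W) - W) i k ^ 2 ≤ ∑ i, W i k ^ 2 := by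
    intro k
    set w : Fin a → ℝ := fun i => W i k with hw
    have hcol : ∀ i, (P * (Pᵀ * W) - W) i k = (P *ᵥ (Pᵀ *ᵥ w)) i - w i := by
      intro i
      have e1 : (P * (Pᵀ * W)) i k = (P *ᵥ (fun l => (Pᵀ * W) l k)) i := entry_mul_eq_mulVec ..
      have e2 : (fun l => (Pᵀ * W) l k) = Pᵀ *ᵥ w := by
        funext l; exact entry_mul_eq_mulVec Pᵀ W l k
      simp [Matrix.sub_apply, e1, e2]; rfl
    have hre : ∑ i, (P * (Pᵀ * W) - W) i k ^ 2 = ∑ i, ((P *ᵥ (Pᵀ *ᵥ w)) i - w i) ^ 2 := by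
      apply Finset.sum_congr rfl; intro i _; rw [hcol i]
    rw [hre]
    set p : Fin b → ℝ := Pᵀ *ᵥ w with hp
    have expand : ∑ i, ((P *ᵥ p) i - w i) ^ 2
        = (∑ i, (P *ᵥ p) i ^ 2) - 2 * (∑ i, w i * (P *ᵥ p) i) + ∑ i, w i ^ 2 := by
      simp only [sub_sq, Finset.sum_add_distrib, Finset.sum_sub_distrib]
      rw [Finset.mul_sum]
      congr 1
      congr 1
      apply Finset.sum_congr rfl; intro i _; ring
    rw [expand, adj_sum P w p, orth_mv h p]
    have : ∑ k1, (Pᵀ *ᵥ w) k1 * p k1 = ∑ k1, p k1 ^ 2 := by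
      apply Finset.sum_congr rfl; intro k1 _; rw [← hp]; ring
    rw [this]
    nlinarith [sumSq_nonneg p]
  calc fsq (P * (Pᵀ * W) - W) = ∑ k, ∑ i, (P * (Pᵀ * W) - W) i k ^ 2 := Finset.sum_comm
    _ ≤ ∑ k, ∑ i, W i k ^ 2 := Finset.sum_le_sum fun k _ => main k
    _ = fsq W := Finset.sum_comm

/-- Row-wise lower bound: if `‖C v‖² ≥ c² ‖v‖²` for all `v`, then
`fsq (A * Cᵀ) ≥ c² · fsq A`. -/
lemma fsq_rmul_lower {C : Matrix (Fin b) (Fin r) ℝ} {c : ℝ}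
    (hC : ∀ v : Fin r → ℝ, c ^ 2 * ∑ k, v k ^ 2 ≤ ∑ j, (C *ᵥ v) j ^ 2)
    (A : Matrix (Fin a) (Fin r) ℝ) : c ^ 2 * fsq A ≤ fsq (A * Cᵀ) := by
  unfold fsq
  rw [Finset.mul_sum]
  apply Finset.sum_le_sum
  intro i _
  have hrow : ∀ j, (A * Cᵀ) i j = (C *ᵥ (fun k => A i k)) j := by
    intro j
    simp [Matrix.mul_apply, Matrix.mulVec, dotProduct, Matrix.transpose_apply, mul_comm]
  calc c ^ 2 * ∑ k, A i k ^ 2 ≤ ∑ j, (C *ᵥ (fun k => A i k)) j ^ 2 := hC _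
    _ = ∑ j, (A * Cᵀ) i j ^ 2 := by
        apply Finset.sum_congr rfl; intro j _; rw [hrow j]

end MatrixLemmas


section FrobLayer
variable {a b : ℕ}

lemma frob_eq_sqrt_fsq (A : Matrix (Fin a) (Fin b) ℝ) : frob A = Real.sqrt (fsq A) := rfl

lemma frob_nonneg' (A : Matrix (Fin a) (Fin b) ℝ) : 0 ≤ frob A := Real.sqrt_nonneg _

lemma frob_sq (A : Matrix (Fin a) (Fin b) ℝ) : frob A ^ 2 = fsq A := Real.sq_sqrt (fsq_nonneg A)

lemma frob_mono {A B : Matrix (Fin a) (Fin b) ℝ} (h : fsq A ≤ fsq B) : frob A ≤ frob B :=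
  Real.sqrt_le_sqrt h

lemma fsq_le_of_frob_le {A : Matrix (Fin a) (Fin b) ℝ} {t : ℝ} (h : frob A ≤ t) :
    fsq A ≤ t ^ 2 := by
  rw [← frob_sq]; exact pow_le_pow_left₀ (frob_nonneg' A) h 2

lemma frob_eq_snorm (A : Matrix (Fin a) (Fin b) ℝ) :
    frob A = snorm (fun p : Fin a × Fin b => A p.1 p.2) := by
  unfold frob snorm
  rw [Fintype.sum_prod_type]

lemma frob_add_le (A B : Matrix (Fin a) (Fin b) ℝ) : frob (A + B) ≤ frob A + frob B := by
  rw [frob_eq_snorm, frob_eq_snorm, frob_eq_snorm]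
  exact snorm_add_le _ _

lemma rowNorm_sq {A : Matrix (Fin a) (Fin b) ℝ} (i : Fin a) :
    rowNorm A i ^ 2 = ∑ j, A i j ^ 2 := Real.sq_sqrt (sumSq_nonneg _)

/-- From a squared lower bound `c² fsq A ≤ d²` extract `frob A ≤ K·d` when `1 ≤ K·c`. -/
lemma frob_from_sq (A : Matrix (Fin a) (Fin b) ℝ) {c d K : ℝ} (hc : 0 < c) (hd : 0 ≤ d)
    (key : c ^ 2 * fsq A ≤ d ^ 2) (hK : 1 ≤ K * c) (hK0 : 0 ≤ K) : frob A ≤ K * d := by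
  have h1 : (c * frob A) ^ 2 ≤ d ^ 2 := by
    rw [mul_pow, frob_sq]; exact key
  have h2 : c * frob A ≤ d :=
    (pow_le_pow_iff_left₀ (mul_nonneg hc.le (frob_nonneg' A)) hd (by norm_num)).1 h1
  have h3 : frob A ≤ K * (c * frob A) := by
    nlinarith [frob_nonneg' A]
  calc frob A ≤ K * (c * frob A) := h3
    _ ≤ K * d := mul_le_mul_of_nonneg_left h2 hK0

lemma sq_form_of_lb {r : ℕ} {A : Matrix (Fin b) (Fin r) ℝ} {c : ℝ} (hc : 0 ≤ c)
    (h : ∀ v : Fin r → ℝ, c * snorm v ≤ snorm (A *ᵥ v)) :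
    ∀ v : Fin r → ℝ, c ^ 2 * ∑ k, v k ^ 2 ≤ ∑ j, (A *ᵥ v) j ^ 2 := by
  intro v
  have h1 := h v
  have h2 : (c * snorm v) ^ 2 ≤ snorm (A *ᵥ v) ^ 2 :=
    pow_le_pow_left₀ (mul_nonneg hc (snorm_nonneg v)) h1 2
  rw [mul_pow, snorm_sq, snorm_sq] at h2
  exact h2

lemma snorm_zero' {ι : Type*} [Fintype ι] : snorm (0 : ι → ℝ) = 0 := by
  simp [snorm]

end FrobLayer

end StmtAux

set_option maxHeartbeats 2000000 in
/-- **Proposition 1.** If `M` is a rank-`r` `μ`-incoherent matrix and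
`XYᵀ` approximates `M` with `d = ‖M - XYᵀ‖_F ≤ Smin/(10r)`, `‖X‖_F ≤ β_T`, `‖Y‖_F ≤ β_T`,
then there is a factorization `M = UVᵀ` with `U` close to `X`, `V` close to `Y`,
`‖U‖_F ≤ ‖X‖_F`, and `U, V` incoherent. -/
theorem stmt3 (m n r : ℕ) (hm : 1 ≤ m) (hn : 1 ≤ n) (hr : 1 ≤ r)
    (μ βT Smax Smin : ℝ) (hβT : 0 < βT)
    (M : Matrix (Fin m) (Fin n) ℝ)
    (Uh : Matrix (Fin m) (Fin r) ℝ) (Vh : Matrix (Fin n) (Fin r) ℝ)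
    (σ : Fin r → ℝ)
    (hUorth : Uhᵀ * Uh = 1) (hVorth : Vhᵀ * Vh = 1)
    (hσpos : ∀ k, 0 < σ k)
    (hσmono : ∀ k l : Fin r, k ≤ l → σ l ≤ σ k)
    (hM : M = Uh * Matrix.diagonal σ * Vhᵀ)
    (hSmax : (∀ k, σ k ≤ Smax) ∧ ∃ k, σ k = Smax)
    (hSmin : (∀ k, Smin ≤ σ k) ∧ ∃ k, σ k = Smin)
    (hincU : ∀ i, ∑ k, Uh i k ^ 2 ≤ μ * r / m)
    (hincV : ∀ j, ∑ k, Vh j k ^ 2 ≤ μ * r / n)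
    (X : Matrix (Fin m) (Fin r) ℝ) (Y : Matrix (Fin n) (Fin r) ℝ)
    (hd : frob (M - X * Yᵀ) ≤ Smin / (10 * r))
    (hX : frob X ≤ βT) (hY : frob Y ≤ βT) :
    ∃ (U : Matrix (Fin m) (Fin r) ℝ) (V : Matrix (Fin n) (Fin r) ℝ),
      U * Vᵀ = M ∧
      frob U ≤ frob X ∧
      frob (U - X) ≤ 5 * βT / (4 * Smin) * frob (M - X * Yᵀ) ∧
      frob (V - Y) ≤ 5 * βT / (2 * Smin) * frob (M - X * Yᵀ) ∧
      (∀ i, rowNorm U i ^ 2 ≤ r * μ / m * βT ^ 2) ∧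
      (∀ j, rowNorm V j ^ 2 ≤ 3 * r * μ / (2 * n) * βT ^ 2) := by
  classical
  -- basic positivity facts
  obtain ⟨k0, hk0⟩ := hSmin.2
  have hSminpos : 0 < Smin := hk0 ▸ hσpos k0
  have hr1 : (1:ℝ) ≤ (r:ℝ) := by exact_mod_cast hr
  obtain ⟨D, hDdef⟩ : ∃ Z, Z = M - X * Yᵀ := ⟨_, rfl⟩
  rw [← hDdef] at hd
  obtain ⟨dF, hdFdef⟩ : ∃ z, z = frob D := ⟨_, rfl⟩
  rw [← hdFdef] at hd
  have hdF0 : 0 ≤ dF := hdFdef ▸ frob_nonneg' D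
  have hd10 : dF ≤ Smin / 10 := by
    refine le_trans hd ?_
    exact div_le_div_of_nonneg_left hSminpos.le (by norm_num) (by nlinarith)
  have hgap : (9:ℝ)/10 * Smin ≤ Smin - dF := by linarith
  obtain ⟨c, hc⟩ : ∃ z, z = (Smin - dF) / βT := ⟨_, rfl⟩
  have hcpos : 0 < c := by rw [hc]; exact div_pos (by linarith) hβT
  obtain ⟨Sd, hSddef⟩ : ∃ Z, Z = Matrix.diagonal σ := ⟨_, rfl⟩
  have hSdT : Sdᵀ = Sd := by rw [hSddef, Matrix.diagonal_transpose]
  rw [← hSddef] at hM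
  obtain ⟨C, hCdef⟩ : ∃ Z, Z = Uhᵀ * X := ⟨_, rfl⟩
  obtain ⟨B, hBdef⟩ : ∃ Z, Z = Vhᵀ * Y := ⟨_, rfl⟩
  obtain ⟨F, hFdef⟩ : ∃ Z, Z = Vhᵀ * Dᵀ * Uh := ⟨_, rfl⟩
  -- Frobenius bounds
  have hfsqX : fsq X ≤ βT ^ 2 := fsq_le_of_frob_le hX
  have hfsqY : fsq Y ≤ βT ^ 2 := fsq_le_of_frob_le hY
  have hfsqC : fsq C ≤ βT ^ 2 := by
    rw [hCdef]; exact le_trans (fsq_lmul_contract hUorth X) hfsqX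
  have hfsqB : fsq B ≤ βT ^ 2 := by
    rw [hBdef]; exact le_trans (fsq_lmul_contract hVorth Y) hfsqY
  have hfsqD : fsq D = dF ^ 2 := by rw [hdFdef]; exact (frob_sq D).symm
  have hfsqF : fsq F ≤ dF ^ 2 := by
    have h1 : fsq (Dᵀ * Uh) ≤ fsq D := by
      calc fsq (Dᵀ * Uh) ≤ fsq Dᵀ := fsq_rmul_contract hUorth Dᵀ
        _ = fsq D := fsq_transpose D
    calc fsq F = fsq (Vhᵀ * (Dᵀ * Uh)) := by rw [hFdef, Matrix.mul_assoc]
      _ ≤ fsq (Dᵀ * Uh) := fsq_lmul_contract hVorth _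
      _ ≤ fsq D := h1
      _ = dF ^ 2 := hfsqD
  -- algebraic identities
  have hMT : Mᵀ = Vh * Sd * Uhᵀ := by
    rw [hM]
    simp [Matrix.transpose_mul, hSdT, Matrix.mul_assoc]
  have hVhMTUh : Vhᵀ * Mᵀ * Uh = Sd := by
    rw [hMT]
    calc Vhᵀ * (Vh * Sd * Uhᵀ) * Uh = (Vhᵀ * Vh) * (Sd * (Uhᵀ * Uh)) := by
          simp only [Matrix.mul_assoc]
      _ = Sd := by rw [hVorth, hUorth, Matrix.mul_one, Matrix.one_mul]
  have hDT : Dᵀ = Mᵀ - Y * Xᵀ := by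
    rw [hDdef]
    simp [Matrix.transpose_sub, Matrix.transpose_mul]
  have hSid : B * Cᵀ = Sd - F := by
    have e1 : Cᵀ = Xᵀ * Uh := by
      rw [hCdef, Matrix.transpose_mul, Matrix.transpose_transpose]
    calc B * Cᵀ = Vhᵀ * (Y * Xᵀ) * Uh := by
          rw [hBdef, e1]; simp only [Matrix.mul_assoc]
      _ = Vhᵀ * Mᵀ * Uh - Vhᵀ * Dᵀ * Uh := by
          rw [hDT]
          simp only [Matrix.sub_mul, Matrix.mul_sub]
          abel
      _ = Sd - F := by rw [hVhMTUh, hFdef]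
  have hSTid : C * Bᵀ = Sd - Fᵀ := by
    have : C * Bᵀ = (B * Cᵀ)ᵀ := by
      rw [Matrix.transpose_mul, Matrix.transpose_transpose]
    rw [this, hSid, Matrix.transpose_sub, hSdT]
  -- lower bound for the diagonal
  have hSd_lb : ∀ u : Fin r → ℝ, Smin * snorm u ≤ snorm (Sd *ᵥ u) := by
    intro u
    apply le_snorm_of_sq_le (mul_nonneg hSminpos.le (snorm_nonneg u))
    rw [mul_pow, snorm_sq]
    rw [Finset.mul_sum]
    apply Finset.sum_le_sum
    intro k _
    rw [hSddef, Matrix.mulVec_diagonal]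
    have h1 : Smin ≤ σ k := hSmin.1 k
    have h2 : Smin ^ 2 ≤ σ k ^ 2 := by nlinarith
    calc Smin ^ 2 * u k ^ 2 ≤ σ k ^ 2 * u k ^ 2 :=
          mul_le_mul_of_nonneg_right h2 (sq_nonneg _)
      _ = (σ k * u k) ^ 2 := by ring
  -- lower bounds for B*Cᵀ and C*Bᵀ
  have hSlb : ∀ u : Fin r → ℝ, (Smin - dF) * snorm u ≤ snorm ((B * Cᵀ) *ᵥ u) := by
    intro u
    rw [hSid, Matrix.sub_mulVec]
    have h1 := snorm_sub_le_snorm (Sd *ᵥ u) (F *ᵥ u)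
    have h2 : snorm (F *ᵥ u) ≤ dF * snorm u := snorm_mv_le hdF0 hfsqF u
    have h3 := hSd_lb u
    calc (Smin - dF) * snorm u = Smin * snorm u - dF * snorm u := by ring
      _ ≤ snorm (Sd *ᵥ u) - snorm (F *ᵥ u) := by linarith
      _ ≤ snorm (Sd *ᵥ u - F *ᵥ u) := snorm_sub_le_snorm _ _
  have hSTlb : ∀ u : Fin r → ℝ, (Smin - dF) * snorm u ≤ snorm ((C * Bᵀ) *ᵥ u) := by
    intro u
    rw [hSTid, Matrix.sub_mulVec]
    have h2 : snorm (Fᵀ *ᵥ u) ≤ dF * snorm u := by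
      apply snorm_mv_le hdF0
      rw [fsq_transpose]; exact hfsqF
    have h3 := hSd_lb u
    calc (Smin - dF) * snorm u = Smin * snorm u - dF * snorm u := by ring
      _ ≤ snorm (Sd *ᵥ u) - snorm (Fᵀ *ᵥ u) := by linarith
      _ ≤ snorm (Sd *ᵥ u - Fᵀ *ᵥ u) := snorm_sub_le_snorm _ _
  -- invertibility
  have hdetS : (B * Cᵀ).det ≠ 0 := by
    intro h0
    obtain ⟨v, hv0, hv⟩ := (Matrix.exists_mulVec_eq_zero_iff).2 h0
    have h1 := hSlb v
    rw [hv, snorm_zero'] at h1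
    have h2 := snorm_pos_of_ne_zero hv0
    nlinarith
  have hdetBC : B.det * C.det ≠ 0 := by
    intro h0
    apply hdetS
    rw [Matrix.det_mul, Matrix.det_transpose]
    exact h0
  have hdetB : IsUnit B.det := isUnit_iff_ne_zero.2 fun h => hdetBC (by rw [h, zero_mul])
  have hdetC : IsUnit C.det := isUnit_iff_ne_zero.2 fun h => hdetBC (by rw [h, mul_zero])
  have hCCinv : C * C⁻¹ = 1 := Matrix.mul_nonsing_inv C hdetC
  -- lower bounds for C, B, Y
  have hClb : ∀ v : Fin r → ℝ, c * snorm v ≤ snorm (C *ᵥ v) := by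
    intro v
    have hBT : IsUnit (Bᵀ).det := by rw [Matrix.det_transpose]; exact hdetB
    set u := (Bᵀ)⁻¹ *ᵥ v with hu0
    have hu : Bᵀ *ᵥ u = v := by
      rw [hu0, Matrix.mulVec_mulVec, Matrix.mul_nonsing_inv _ hBT, Matrix.one_mulVec]
    have h1 : snorm (C *ᵥ v) = snorm ((C * Bᵀ) *ᵥ u) := by
      rw [← hu, Matrix.mulVec_mulVec]
    have h2 := hSTlb u
    have h3 : snorm v ≤ βT * snorm u := by
      rw [← hu]
      apply snorm_mv_le hβT.le
      rw [fsq_transpose]; exact hfsqB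
    rw [h1, hc]
    have h4 : (Smin - dF) / βT * snorm v ≤ (Smin - dF) * snorm u := by
      rw [div_mul_eq_mul_div, div_le_iff₀ hβT]
      calc (Smin - dF) * snorm v ≤ (Smin - dF) * (βT * snorm u) :=
            mul_le_mul_of_nonneg_left h3 (by linarith)
        _ = (Smin - dF) * snorm u * βT := by ring
    linarith
  have hBlb : ∀ v : Fin r → ℝ, c * snorm v ≤ snorm (B *ᵥ v) := by
    intro v
    have hCT : IsUnit (Cᵀ).det := by rw [Matrix.det_transpose]; exact hdetC
    set u := (Cᵀ)⁻¹ *ᵥ v with hu0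
    have hu : Cᵀ *ᵥ u = v := by
      rw [hu0, Matrix.mulVec_mulVec, Matrix.mul_nonsing_inv _ hCT, Matrix.one_mulVec]
    have h1 : snorm (B *ᵥ v) = snorm ((B * Cᵀ) *ᵥ u) := by
      rw [← hu, Matrix.mulVec_mulVec]
    have h2 := hSlb u
    have h3 : snorm v ≤ βT * snorm u := by
      rw [← hu]
      apply snorm_mv_le hβT.le
      rw [fsq_transpose]; exact hfsqC
    rw [h1, hc]
    have h4 : (Smin - dF) / βT * snorm v ≤ (Smin - dF) * snorm u := by
      rw [div_mul_eq_mul_div, div_le_iff₀ hβT]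
      calc (Smin - dF) * snorm v ≤ (Smin - dF) * (βT * snorm u) :=
            mul_le_mul_of_nonneg_left h3 (by linarith)
        _ = (Smin - dF) * snorm u * βT := by ring
    linarith
  have hYlb : ∀ v : Fin r → ℝ, c * snorm v ≤ snorm (Y *ᵥ v) := by
    intro v
    have e : B *ᵥ v = Vhᵀ *ᵥ (Y *ᵥ v) := by
      rw [Matrix.mulVec_mulVec, hBdef]

    calc c * snorm v ≤ snorm (B *ᵥ v) := hBlb v
      _ = snorm (Vhᵀ *ᵥ (Y *ᵥ v)) := by rw [e]
      _ ≤ snorm (Y *ᵥ v) := contract_snorm hVorth _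
  have hYlb2 := sq_form_of_lb hcpos.le hYlb
  have hClb2 := sq_form_of_lb hcpos.le hClb
  -- the factorization
  have hUhUhM : Uh * (Uhᵀ * M) = M := by
    rw [hM]
    calc Uh * (Uhᵀ * (Uh * Sd * Vhᵀ)) = Uh * ((Uhᵀ * Uh) * (Sd * Vhᵀ)) := by
          simp only [Matrix.mul_assoc]
      _ = Uh * Sd * Vhᵀ := by rw [hUorth, Matrix.one_mul, Matrix.mul_assoc]
  refine ⟨Uh * C, Vh * (Sd * (C⁻¹)ᵀ), ?_, ?_, ?_, ?_, ?_, ?_⟩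
  · -- U * Vᵀ = M
    have e1 : (Vh * (Sd * (C⁻¹)ᵀ))ᵀ = C⁻¹ * Sd * Vhᵀ := by
      simp [Matrix.transpose_mul, hSdT, Matrix.transpose_transpose, Matrix.mul_assoc]
    rw [e1, hM]
    calc Uh * C * (C⁻¹ * Sd * Vhᵀ) = Uh * ((C * C⁻¹) * (Sd * Vhᵀ)) := by
          simp only [Matrix.mul_assoc]
      _ = Uh * Sd * Vhᵀ := by rw [hCCinv, Matrix.one_mul, Matrix.mul_assoc]
  · -- frob U ≤ frob X
    apply frob_mono
    rw [fsq_lmul_orth hUorth C, hCdef]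
    exact fsq_lmul_contract hUorth X
  · -- frob (U - X) ≤ 5βT/(4Smin) dF
    rw [← hDdef, ← hdFdef]
    have h1 := fsq_rmul_lower hYlb2 (Uh * C - X)
    have h2 : (Uh * C - X) * Yᵀ = Uh * (Uhᵀ * (-D)) - (-D) := by
      have e1 : X * Yᵀ = M - D := by rw [hDdef]; abel
      calc (Uh * C - X) * Yᵀ = Uh * (Uhᵀ * (X * Yᵀ)) - X * Yᵀ := by
            rw [hCdef]
            simp only [Matrix.sub_mul, Matrix.mul_assoc]
        _ = Uh * (Uhᵀ * M) - Uh * (Uhᵀ * D) - (M - D) := by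
            rw [e1, Matrix.mul_sub, Matrix.mul_sub]
        _ = Uh * (Uhᵀ * (-D)) - (-D) := by
            rw [hUhUhM, Matrix.mul_neg, Matrix.mul_neg]
            abel
    have h3 : fsq ((Uh * C - X) * Yᵀ) ≤ fsq D := by
      rw [h2]
      calc fsq (Uh * (Uhᵀ * (-D)) - (-D)) ≤ fsq (-D) := fsq_proj_residual hUorth (-D)
        _ = fsq D := fsq_neg D
    have key : c ^ 2 * fsq (Uh * C - X) ≤ dF ^ 2 := by
      calc c ^ 2 * fsq (Uh * C - X) ≤ fsq ((Uh * C - X) * Yᵀ) := h1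
        _ ≤ fsq D := h3
        _ = dF ^ 2 := hfsqD
    apply frob_from_sq _ hcpos hdF0 key
    · have hKc : 5 * βT / (4 * Smin) * c = 5 * (Smin - dF) / (4 * Smin) := by
        rw [hc]; field_simp
      rw [hKc, le_div_iff₀ (by positivity)]
      linarith
    · positivity
  · -- frob (V - Y) ≤ 5βT/(2Smin) dF
    rw [← hDdef, ← hdFdef]
    have h1 := fsq_rmul_lower hClb2 (Vh * (Sd * (C⁻¹)ᵀ) - Y)
    have h2 : (Vh * (Sd * (C⁻¹)ᵀ) - Y) * Cᵀ = Dᵀ * Uh := by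
      have e0 : (C⁻¹)ᵀ * Cᵀ = 1 := by
        rw [← Matrix.transpose_mul, hCCinv, Matrix.transpose_one]
      have e1 : Vh * (Sd * (C⁻¹)ᵀ) * Cᵀ = Vh * Sd := by
        calc Vh * (Sd * (C⁻¹)ᵀ) * Cᵀ = Vh * (Sd * ((C⁻¹)ᵀ * Cᵀ)) := by
              simp only [Matrix.mul_assoc]
          _ = Vh * Sd := by rw [e0, Matrix.mul_one]
      have e2 : Mᵀ * Uh = Vh * Sd := by
        rw [hMT]
        calc Vh * Sd * Uhᵀ * Uh = Vh * Sd * (Uhᵀ * Uh) := by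
              simp only [Matrix.mul_assoc]
          _ = Vh * Sd := by rw [hUorth, Matrix.mul_one]
      have e3 : Y * Cᵀ = Y * Xᵀ * Uh := by
        rw [hCdef, Matrix.transpose_mul, Matrix.transpose_transpose, Matrix.mul_assoc]
      calc (Vh * (Sd * (C⁻¹)ᵀ) - Y) * Cᵀ = Vh * (Sd * (C⁻¹)ᵀ) * Cᵀ - Y * Cᵀ :=
            Matrix.sub_mul _ _ _
        _ = Mᵀ * Uh - Y * Xᵀ * Uh := by rw [e1, e2, e3]
        _ = (Mᵀ - Y * Xᵀ) * Uh := by rw [Matrix.sub_mul]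
        _ = Dᵀ * Uh := by rw [← hDT]
    have h3 : fsq (Dᵀ * Uh) ≤ fsq D := by
      calc fsq (Dᵀ * Uh) ≤ fsq Dᵀ := fsq_rmul_contract hUorth Dᵀ
        _ = fsq D := fsq_transpose D
    have key : c ^ 2 * fsq (Vh * (Sd * (C⁻¹)ᵀ) - Y) ≤ dF ^ 2 := by
      calc c ^ 2 * fsq (Vh * (Sd * (C⁻¹)ᵀ) - Y) ≤ fsq ((Vh * (Sd * (C⁻¹)ᵀ) - Y) * Cᵀ) := h1
        _ = fsq (Dᵀ * Uh) := by rw [h2]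
        _ ≤ fsq D := h3
        _ = dF ^ 2 := hfsqD
    apply frob_from_sq _ hcpos hdF0 key
    · have hKc : 5 * βT / (2 * Smin) * c = 5 * (Smin - dF) / (2 * Smin) := by
        rw [hc]; field_simp
      rw [hKc, le_div_iff₀ (by positivity)]
      linarith
    · positivity
  · -- row norms of U
    intro i
    rw [rowNorm_sq]
    have hrow : ∀ k, (Uh * C) i k = (Cᵀ *ᵥ (fun l => Uh i l)) k := by
      intro k
      simp [Matrix.mul_apply, Matrix.mulVec, dotProduct, Matrix.transpose_apply,
        mul_comm]
    have h1 : ∑ k, (Uh * C) i k ^ 2 ≤ fsq Cᵀ * ∑ l, Uh i l ^ 2 := by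
      calc ∑ k, (Uh * C) i k ^ 2 = ∑ k, (Cᵀ *ᵥ (fun l => Uh i l)) k ^ 2 := by
            apply Finset.sum_congr rfl; intro k _; rw [hrow k]
        _ ≤ fsq Cᵀ * ∑ l, Uh i l ^ 2 := mv_sq_le Cᵀ _
    have h2 : fsq Cᵀ ≤ βT ^ 2 := by rw [fsq_transpose]; exact hfsqC
    have h3 : fsq Cᵀ * ∑ l, Uh i l ^ 2 ≤ βT ^ 2 * (μ * r / m) :=
      mul_le_mul h2 (hincU i) (sumSq_nonneg _) (sq_nonneg βT)
    calc ∑ k, (Uh * C) i k ^ 2 ≤ βT ^ 2 * (μ * r / m) := le_trans h1 h3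
      _ = ↑r * μ / ↑m * βT ^ 2 := by ring
  · -- row norms of V
    intro j
    rw [rowNorm_sq]
    set A := Sd * (C⁻¹)ᵀ with hAdef
    -- first: frob (V - Y) ≤ βT / 9
    have h1 := fsq_rmul_lower hClb2 (Vh * A - Y)
    have h2 : (Vh * A - Y) * Cᵀ = Dᵀ * Uh := by
      have e0 : (C⁻¹)ᵀ * Cᵀ = 1 := by
        rw [← Matrix.transpose_mul, hCCinv, Matrix.transpose_one]
      have e1 : Vh * A * Cᵀ = Vh * Sd := by
        calc Vh * A * Cᵀ = Vh * (Sd * ((C⁻¹)ᵀ * Cᵀ)) := by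
              rw [hAdef]; simp only [Matrix.mul_assoc]
          _ = Vh * Sd := by rw [e0, Matrix.mul_one]
      have e2 : Mᵀ * Uh = Vh * Sd := by
        rw [hMT]
        calc Vh * Sd * Uhᵀ * Uh = Vh * Sd * (Uhᵀ * Uh) := by
              simp only [Matrix.mul_assoc]
          _ = Vh * Sd := by rw [hUorth, Matrix.mul_one]
      have e3 : Y * Cᵀ = Y * Xᵀ * Uh := by
        rw [hCdef, Matrix.transpose_mul, Matrix.transpose_transpose, Matrix.mul_assoc]
      calc (Vh * A - Y) * Cᵀ = Vh * A * Cᵀ - Y * Cᵀ := Matrix.sub_mul _ _ _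
        _ = Mᵀ * Uh - Y * Xᵀ * Uh := by rw [e1, e2, e3]
        _ = (Mᵀ - Y * Xᵀ) * Uh := by rw [Matrix.sub_mul]
        _ = Dᵀ * Uh := by rw [← hDT]
    have h3 : fsq (Dᵀ * Uh) ≤ fsq D := by
      calc fsq (Dᵀ * Uh) ≤ fsq Dᵀ := fsq_rmul_contract hUorth Dᵀ
        _ = fsq D := fsq_transpose D
    have key : c ^ 2 * fsq (Vh * A - Y) ≤ dF ^ 2 := by
      calc c ^ 2 * fsq (Vh * A - Y) ≤ fsq ((Vh * A - Y) * Cᵀ) := h1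
        _ = fsq (Dᵀ * Uh) := by rw [h2]
        _ ≤ fsq D := h3
        _ = dF ^ 2 := hfsqD
    have hcf : c * frob (Vh * A - Y) ≤ dF := by
      have ha : (c * frob (Vh * A - Y)) ^ 2 ≤ dF ^ 2 := by
        rw [mul_pow, frob_sq]; exact key
      exact (pow_le_pow_iff_left₀ (mul_nonneg hcpos.le (frob_nonneg' _)) hdF0
        (by norm_num)).1 ha
    have hVY9 : frob (Vh * A - Y) ≤ βT / 9 := by
      have hb : (Smin - dF) * frob (Vh * A - Y) ≤ dF * βT := by
        have := hcf
        rw [hc, div_mul_eq_mul_div, div_le_iff₀ hβT] at this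
        linarith [this]
      nlinarith [frob_nonneg' (Vh * A - Y), hSminpos, hβT,
        mul_le_mul_of_nonneg_left hgap (frob_nonneg' (Vh * A - Y)),
        mul_le_mul_of_nonneg_right hd10 hβT.le]
    have hfrobV : frob (Vh * A) ≤ 10 / 9 * βT := by
      have e : Vh * A = Y + (Vh * A - Y) := by abel
      calc frob (Vh * A) = frob (Y + (Vh * A - Y)) := by rw [← e]
        _ ≤ frob Y + frob (Vh * A - Y) := frob_add_le _ _
        _ ≤ βT + βT / 9 := add_le_add hY hVY9
        _ = 10 / 9 * βT := by ring
    have hfsqA : fsq A ≤ 3 / 2 * βT ^ 2 := by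
      have e : fsq A = fsq (Vh * A) := (fsq_lmul_orth hVorth A).symm
      rw [e, ← frob_sq]
      have := pow_le_pow_left₀ (frob_nonneg' (Vh * A)) hfrobV 2
      nlinarith [sq_nonneg βT]
    have hrow : ∀ k, (Vh * A) j k = (Aᵀ *ᵥ (fun l => Vh j l)) k := by
      intro k
      simp [Matrix.mul_apply, Matrix.mulVec, dotProduct, Matrix.transpose_apply,
        mul_comm]
    have h4 : ∑ k, (Vh * A) j k ^ 2 ≤ fsq Aᵀ * ∑ l, Vh j l ^ 2 := by
      calc ∑ k, (Vh * A) j k ^ 2 = ∑ k, (Aᵀ *ᵥ (fun l => Vh j l)) k ^ 2 := by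
            apply Finset.sum_congr rfl; intro k _; rw [hrow k]
        _ ≤ fsq Aᵀ * ∑ l, Vh j l ^ 2 := mv_sq_le Aᵀ _
    have h5 : fsq Aᵀ * ∑ l, Vh j l ^ 2 ≤ (3 / 2 * βT ^ 2) * (μ * r / n) := by
      apply mul_le_mul
      · rw [fsq_transpose]; exact hfsqA
      · exact hincV j
      · exact sumSq_nonneg _
      · positivity
    calc ∑ k, (Vh * A) j k ^ 2 ≤ (3 / 2 * βT ^ 2) * (μ * r / n) := le_trans h4 h5
      _ = 3 * ↑r * μ / (2 * ↑n) * βT ^ 2 := by ring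

end
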